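/- The odd map D_3 defined on the q-deformed Witt superalgebra by D_3(L_n) = n G_{n-1} and D_3(G_n) = 0 is an odd α⁰-derivation: D_3([x,y]) = [D_3(x), y] + (-1)^{|x|}[x, D_3(y)] for all homogeneous x, y ∈ W^q. -/

import Mathlib

noncomputable section

/-- The `q`-number `{m} = (1-q^m)/(1-q)`. -/
def qn (q : ℂ) (m : ℤ) : ℂ := (1 - q ^ m) / (1 - q)

/-- The `q`-deformed Witt superalgebra `W^q`, with even basis indexed by `Sum.inl n`
(the `L_n`) and odd basis indexed by `Sum.inr n` (the `G_n`). -/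
abbrev Wq : Type := (ℤ ⊕ ℤ) →₀ ℂ

def L (n : ℤ) : Wq := Finsupp.single (Sum.inl n) 1
def G (n : ℤ) : Wq := Finsupp.single (Sum.inr n) 1

/-- Bracket of `W^q` on basis elements:
`[L_n, L_m] = ({m}-{n}) L_{n+m}`, `[L_n, G_m] = ({m+1}-{n}) G_{n+m}`,
`[G_m, L_n] = -[L_n, G_m]`, `[G_n, G_m] = 0`. -/
def brBasis (q : ℂ) : ℤ ⊕ ℤ → ℤ ⊕ ℤ → Wq
  | Sum.inl n, Sum.inl m => (qn q m - qn q n) • L (n + m)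
  | Sum.inl n, Sum.inr m => (qn q (m + 1) - qn q n) • G (n + m)
  | Sum.inr m, Sum.inl n => -((qn q (m + 1) - qn q n) • G (n + m))
  | Sum.inr _, Sum.inr _ => 0

/-- The bilinear extension of the bracket to `W^q`. -/
def br (q : ℂ) (x y : Wq) : Wq :=
  x.sum fun a ca => y.sum fun b cb => (ca * cb) • brBasis q a b

/-- The twist map `α(L_n) = (1+q^n) L_n`, `α(G_n) = (1+q^{n+1}) G_n`. -/
def alphaW (q : ℂ) (x : Wq) : Wq :=
  x.sum fun a ca =>
    match a with
    | Sum.inl n => (ca * (1 + q ^ n)) • L n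
    | Sum.inr n => (ca * (1 + q ^ (n + 1))) • G n

/-- `par false x`: `x` is even (supported on the `L_n`);
`par true x`: `x` is odd (supported on the `G_n`). -/
def par (i : Bool) (x : Wq) : Prop :=
  if i then ∀ n, x (Sum.inl n) = 0 else ∀ n, x (Sum.inr n) = 0

/-- The sign `(-1)^{ij}` for parities `i, j`. -/
def sB (i j : Bool) : ℂ := if i && j then -1 else 1

end

/-- The odd map `D_3 : L_n ↦ n G_{n-1}, G_n ↦ 0`. -/
noncomputable def D3 (x : Wq) : Wq :=
  x.sum fun a c =>
    match a with
    | Sum.inl n => (c * (n : ℂ)) • G (n - 1)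
    | Sum.inr _ => 0

section Aux

lemma D3_zero : D3 0 = 0 := Finsupp.sum_zero_index

lemma D3_add (x y : Wq) : D3 (x + y) = D3 x + D3 y := by
  unfold D3
  apply Finsupp.sum_add_index'
  · rintro (n | n) <;> simp
  · rintro (n | n) c d <;> simp [add_mul, add_smul]

lemma D3_single_inl (n : ℤ) (c : ℂ) :
    D3 (Finsupp.single (Sum.inl n) c) = (c * (n : ℂ)) • G (n - 1) := by
  unfold D3
  rw [Finsupp.sum_single_index]
  simp

lemma D3_single_inr (n : ℤ) (c : ℂ) : D3 (Finsupp.single (Sum.inr n) c) = 0 := by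
  unfold D3
  rw [Finsupp.sum_single_index] <;> simp

lemma br_zero_left (q : ℂ) (y : Wq) : br q 0 y = 0 := Finsupp.sum_zero_index

lemma br_zero_right (q : ℂ) (x : Wq) : br q x 0 = 0 := by
  unfold br
  simp [Finsupp.sum_zero_index]

lemma br_add_left (q : ℂ) (x x' y : Wq) :
    br q (x + x') y = br q x y + br q x' y := by
  unfold br
  apply Finsupp.sum_add_index'
  · intro a; apply Finset.sum_eq_zero; intro b _; simp
  · intro a c c'
    rw [← Finsupp.sum_add]
    apply Finsupp.sum_congr
    intro b _
    simp [add_mul, add_smul]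

lemma br_add_right (q : ℂ) (x y y' : Wq) :
    br q x (y + y') = br q x y + br q x y' := by
  unfold br
  rw [← Finsupp.sum_add]
  apply Finsupp.sum_congr
  intro a _
  apply Finsupp.sum_add_index'
  · intro b; simp
  · intro b c c'; simp [mul_add, add_smul]

lemma br_single_single (q : ℂ) (a b : ℤ ⊕ ℤ) (c d : ℂ) :
    br q (Finsupp.single a c) (Finsupp.single b d) = (c * d) • brBasis q a b := by
  unfold br
  rw [Finsupp.sum_single_index, Finsupp.sum_single_index]
  · simp
  · apply Finset.sum_eq_zero; intro b _; simp

/-- The Leibniz identity with sign `+1` holds for all `x, y`. -/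
lemma keyA (q : ℂ) (x y : Wq) :
    D3 (br q x y) = br q (D3 x) y + br q x (D3 y) := by
  induction x using Finsupp.induction_linear with
  | zero => simp [br_zero_left, D3_zero]
  | add x x' hx hx' =>
    rw [br_add_left, D3_add, D3_add, br_add_left, br_add_left, hx, hx']
    abel
  | single a c =>
    induction y using Finsupp.induction_linear with
    | zero => simp [br_zero_right, D3_zero]
    | add y y' hy hy' =>
      rw [br_add_right, D3_add, D3_add, br_add_right, br_add_right, hy, hy']
      abel
    | single b d =>
      rcases a with n | n <;> rcases b with m | m
      · -- L L case
        rw [br_single_single, D3_single_inl, D3_single_inl]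
        simp only [brBasis, L, G, Finsupp.smul_single, smul_eq_mul, mul_one,
          br_single_single, sub_add_cancel, D3_single_inl, smul_smul]
        simp only [brBasis, G, Finsupp.smul_single, smul_eq_mul, mul_one,
          Finsupp.single_neg, smul_neg]
        rw [show m + (n - 1) = n + m - 1 from by ring, show n + (m - 1) = n + m - 1 from by ring,
          ← Finsupp.single_neg, ← Finsupp.single_add]
        congr 1
        push_cast
        ring
      · rw [br_single_single, D3_single_inl, D3_single_inr]
        simp only [brBasis, G, Finsupp.smul_single, smul_eq_mul, mul_one, D3_single_inr,
          smul_zero, br_zero_right, add_zero]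
        rw [br_single_single]
        simp [brBasis]
      · rw [br_single_single, D3_single_inr, D3_single_inl, br_zero_left, zero_add]
        have h1 : (d * (m : ℂ)) • G (m - 1) = Finsupp.single (Sum.inr (m - 1)) (d * m) := by
          simp [G, Finsupp.smul_single]
        rw [h1, br_single_single]
        simp only [brBasis, G, Finsupp.smul_single, smul_eq_mul, mul_one, smul_neg,
          ← Finsupp.single_neg, D3_single_inr, smul_zero]
      · rw [br_single_single, D3_single_inr, D3_single_inr, br_zero_left, br_zero_right]
        simp [brBasis, D3_zero]

lemma D3_apply_inl (y : Wq) (n : ℤ) : D3 y (Sum.inl n) = 0 := by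
  rw [D3, Finsupp.sum_apply]
  apply Finset.sum_eq_zero
  rintro (m | m) _
  · simp [G, Finsupp.smul_single, Finsupp.single_apply]
  · simp

/-- For odd `x`, `br q x (D3 y) = 0`. -/
lemma keyB (q : ℂ) (x y : Wq) (hx : par true x) : br q x (D3 y) = 0 := by
  unfold br
  apply Finset.sum_eq_zero
  rintro (n | n) ha
  · exact absurd (hx n) (Finsupp.mem_support_iff.mp ha)
  · apply Finset.sum_eq_zero
    rintro (m | m) hb
    · exact absurd (D3_apply_inl y m) (Finsupp.mem_support_iff.mp hb)
    · simp [brBasis]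

end Aux

/-- `D_3` is an odd `α⁰`-derivation of `W^q`:
`D_3([x,y]) = [D_3 x, y] + (-1)^{|x|} [x, D_3 y]` for homogeneous `x, y`. -/
theorem stmt9 (q : ℂ) (hq0 : q ≠ 0) (hq1 : q ≠ 1) :
    ∀ (i j : Bool) (x y : Wq), par i x → par j y →
      D3 (br q x y) = br q (D3 x) y + (if i then (-1 : ℂ) else 1) • br q x (D3 y) := by
  intro i j x y hx _
  cases i with
  | false => simpa using keyA q x y
  | true => rw [keyA q x y, keyB q x y hx]; simp
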